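/- Let N be a right near-ring. Then every homomorphic image of N has the insertion of factors property — that is, for every right near-ring M and every surjective map f : N → M satisfying f(x + y) = f(x) + f(y) and f(x * y) = f(x) * f(y) for all x, y ∈ N, the structure M satisfies: a * b = 0 implies a * m * b = 0 for all a, b, m ∈ M — if and only if for every ideal I of N and all a, b, n ∈ N, a * b ∈ I implies a * n * b ∈ I. -/

import Mathlib

/-- An ideal of a right near-ring `N`. -/
def IsNearRingIdeal {N : Type*} [AddGroup N] [Mul N] (I : Set N) : Prop :=
  (0 : N) ∈ I ∧
  (∀ a b : N, a ∈ I → b ∈ I → a + b ∈ I) ∧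
  (∀ a : N, a ∈ I → -a ∈ I) ∧
  (∀ x i : N, i ∈ I → x + i - x ∈ I) ∧
  (∀ i n : N, i ∈ I → i * n ∈ I) ∧
  (∀ n m i : N, i ∈ I → n * (m + i) - n * m ∈ I)

theorem stmt_0 {N : Type} [AddGroup N] [Semigroup N] [RightDistribClass N] :
    (∀ (M : Type) [AddGroup M] [Semigroup M] [RightDistribClass M] (f : N → M),
        Function.Surjective f →
        (∀ x y : N, f (x + y) = f x + f y) →
        (∀ x y : N, f (x * y) = f x * f y) →
        ∀ a b m : M, a * b = 0 → a * m * b = 0) ↔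
    (∀ I : Set N, IsNearRingIdeal I → ∀ a b n : N, a * b ∈ I → a * n * b ∈ I) := by
  constructor
  · intro h I hI a b n hab
    obtain ⟨h0, hadd, hneg, hnorm, hmulr, hmull⟩ := hI
    let S : AddSubgroup N :=
      { carrier := I
        zero_mem' := h0
        add_mem' := fun ha hb => hadd _ _ ha hb
        neg_mem' := fun ha => hneg _ ha }
    haveI : S.Normal := ⟨fun x hx g => by
      show g + x + -g ∈ I; simpa [sub_eq_add_neg] using hnorm g x hx⟩
    -- swap lemma
    have hswap : ∀ x y : N, -x + y ∈ I → y - x ∈ I := by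
      intro x y hxy
      have := hnorm x (-x + y) hxy
      simpa [sub_eq_add_neg, ← add_assoc] using this
    -- well-definedness of multiplication on the quotient
    have key : ∀ a₁ b₁ a₂ b₂ : N, -a₁ + a₂ ∈ I → -b₁ + b₂ ∈ I →
        -(a₁ * b₁) + a₂ * b₂ ∈ I := by
      intro a₁ b₁ a₂ b₂ hi hj
      have ha2 : a₂ = a₁ + (-a₁ + a₂) := by simp
      have hb2 : b₂ = b₁ + (-b₁ + b₂) := by simp
      set i := -a₁ + a₂ with hidef
      set j := -b₁ + b₂ with hjdef
      have hu : i * (b₁ + j) ∈ I := hmulr _ _ hi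
      have hv : a₁ * (b₁ + j) - a₁ * b₁ ∈ I := hmull a₁ b₁ j hj
      have hexp : a₂ * b₂ = a₁ * (b₁ + j) + i * (b₁ + j) := by
        rw [ha2, hb2, add_mul]
      have e : a₂ * b₂ - a₁ * b₁
          = (a₁ * (b₁ + j) + i * (b₁ + j) - a₁ * (b₁ + j))
            + (a₁ * (b₁ + j) - a₁ * b₁) := by
        rw [hexp]
        simp [sub_eq_add_neg, add_assoc]
      have hmem : a₂ * b₂ - a₁ * b₁ ∈ I := by
        rw [e]
        exact hadd _ _ (hnorm _ _ hu) hv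
      -- conjugate back
      have := hnorm (-(a₁ * b₁)) (a₂ * b₂ - a₁ * b₁) hmem
      simpa [sub_eq_add_neg, ← add_assoc] using this
    letI : Mul (N ⧸ S) :=
      ⟨fun x y => Quotient.liftOn₂' x y (fun p q => ((p * q : N) : N ⧸ S))
        (fun a₁ b₁ a₂ b₂ ha hb => Quotient.sound' (by
          rw [QuotientAddGroup.leftRel_apply] at ha hb ⊢
          exact key _ _ _ _ ha hb))⟩
    have hmulmk : ∀ x y : N, ((x * y : N) : N ⧸ S) = (x : N ⧸ S) * (y : N ⧸ S) :=
      fun _ _ => rfl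
    letI : Semigroup (N ⧸ S) :=
      { mul_assoc := fun x y z => Quotient.inductionOn₃' x y z fun p q r =>
          congrArg (QuotientAddGroup.mk) (mul_assoc p q r) }
    letI : RightDistribClass (N ⧸ S) :=
      ⟨fun x y z => Quotient.inductionOn₃' x y z fun p q r =>
        congrArg (QuotientAddGroup.mk) (add_mul p q r)⟩
    have hmem0 : ∀ x : N, (x : N ⧸ S) = 0 ↔ x ∈ I := fun x =>
      QuotientAddGroup.eq_zero_iff x
    have hres := h (N ⧸ S) (QuotientAddGroup.mk : N → N ⧸ S)
      QuotientAddGroup.mk_surjective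
      (fun x y => rfl) (fun x y => rfl)
      ((a : N ⧸ S)) ((b : N ⧸ S)) ((n : N ⧸ S))
      (by rw [← hmulmk]; exact (hmem0 _).mpr hab)
    rw [← hmulmk, ← hmulmk] at hres
    exact (hmem0 _).mp hres
  · intro h M _ _ _ f hf hadd hmul a b m hab
    have hf0 : f 0 = 0 := by
      have h00 : f 0 = f 0 + f 0 := by simpa using hadd 0 0
      exact (left_eq_add.mp h00)
    have hfneg : ∀ x : N, f (-x) = -f x := by
      intro x
      have := hadd x (-x)
      rw [add_neg_cancel, hf0] at this
      exact eq_neg_of_add_eq_zero_right this.symm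
    have zero_mul' : ∀ x : M, (0 : M) * x = 0 := by
      intro x
      have h2 : ((0 : M) + 0) * x = 0 * x + 0 * x := add_mul 0 0 x
      rw [add_zero] at h2
      exact (left_eq_add.mp h2)
    have hI : IsNearRingIdeal {x : N | f x = 0} := by
      refine ⟨hf0, ?_, ?_, ?_, ?_, ?_⟩
      · intro p q hp hq
        show f (p + q) = 0
        rw [hadd, hp, hq, add_zero]
      · intro p hp
        show f (-p) = 0
        rw [hfneg, hp, neg_zero]
      · intro x i hi
        show f (x + i - x) = 0
        rw [sub_eq_add_neg, hadd, hadd, hfneg, hi, add_zero, add_neg_cancel]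
      · intro i n hi
        show f (i * n) = 0
        rw [hmul, hi, zero_mul']
      · intro n m i hi
        show f (n * (m + i) - n * m) = 0
        rw [sub_eq_add_neg, hadd, hfneg, hmul, hmul, hadd, hi, add_zero,
          add_neg_cancel]
    obtain ⟨a', rfl⟩ := hf a
    obtain ⟨b', rfl⟩ := hf b
    obtain ⟨m', rfl⟩ := hf m
    have hab' : a' * b' ∈ {x : N | f x = 0} := by
      show f (a' * b') = 0
      rw [hmul]; exact hab
    have h2 := h _ hI a' b' m' hab'
    show f a' * f m' * f b' = 0
    rw [← hmul, ← hmul]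
    exact h2
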